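/- Let n, t, m be integers with 3t < n and n−t ≤ m ≤ n, and let x₁ ≤ x₂ ≤ … ≤ x_m be real numbers. Set s = m−(n−t) and let V = (1/(2(n−t)−m)) · ∑_{j=s+1}^{n−t} x_j be the trimmed mean obtained by removing the s smallest and s largest values. Then (i) x_{s+1} ≤ V ≤ x_{n−t}, and (ii) (1/(n−t))·∑_{j=1}^{n−t} x_j ≤ V ≤ (1/(n−t))·∑_{j=s+1}^{m} x_j; that is, V lies both in the trimmed interval [x_{s+1}, x_{n−t}] and in the interval bounded by the mean of the n−t smallest values and the mean of the n−t largest values. -/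
import Mathlib


/-- Synchronous trimmed mean: with `3t < n` and `n - t ≤ m ≤ n` values `x₁ ≤ … ≤ x_m`
(1-indexed), setting `s = m - (n-t)`, the trimmed mean
`V = (1/(2(n-t)-m)) · ∑_{j=s+1}^{n-t} x_j` satisfies
`x_{s+1} ≤ V ≤ x_{n-t}` and
`(1/(n-t))·∑_{j=1}^{n-t} x_j ≤ V ≤ (1/(n-t))·∑_{j=s+1}^{m} x_j`. -/
theorem trimmed_mean_mem_boxes (n t m : ℕ) (ht : 3 * t < n)
    (hm1 : n - t ≤ m) (hm2 : m ≤ n)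
    (x : ℕ → ℝ) (hx : ∀ i j, 1 ≤ i → i ≤ j → j ≤ m → x i ≤ x j) :
    let s := m - (n - t)
    let V := (1 / ((2 * (n - t) - m : ℕ) : ℝ)) * ∑ j ∈ Finset.Icc (s + 1) (n - t), x j
    (x (s + 1) ≤ V ∧ V ≤ x (n - t)) ∧
    ((1 / ((n - t : ℕ) : ℝ)) * ∑ j ∈ Finset.Icc 1 (n - t), x j ≤ V ∧
      V ≤ (1 / ((n - t : ℕ) : ℝ)) * ∑ j ∈ Finset.Icc (s + 1) m, x j) := by
  intro s V
  set k := n - t with hk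
  have hs : s = m - k := rfl
  have hsk : s < k := by omega
  have hkm : k ≤ m := hm1
  have h2km : 2 * k - m = k - s := by omega
  set A := ∑ j ∈ Finset.Icc 1 s, x j with hA
  set B := ∑ j ∈ Finset.Icc (s + 1) k, x j with hB
  set C := ∑ j ∈ Finset.Icc (k + 1) m, x j with hC
  have hcard : (Finset.Icc (s + 1) k).card = k - s := by
    rw [Nat.card_Icc]; omega
  have hcardA : (Finset.Icc 1 s).card = s := by rw [Nat.card_Icc]; omega
  have hcardC : (Finset.Icc (k + 1) m).card = s := by rw [Nat.card_Icc]; omega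
  -- bounds on B
  have hBlo : ((k - s : ℕ) : ℝ) * x (s + 1) ≤ B := by
    have := Finset.card_nsmul_le_sum (Finset.Icc (s + 1) k) x (x (s + 1))
      (fun j hj => by
        simp only [Finset.mem_Icc] at hj
        exact hx (s + 1) j (by omega) hj.1 (le_trans hj.2 hkm))
    rwa [hcard, nsmul_eq_mul] at this
  have hBhi : B ≤ ((k - s : ℕ) : ℝ) * x k := by
    have := Finset.sum_le_card_nsmul (Finset.Icc (s + 1) k) x (x k)
      (fun j hj => by
        simp only [Finset.mem_Icc] at hj
        exact hx j k (by omega) hj.2 (by omega))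
    rwa [hcard, nsmul_eq_mul] at this
  have hAhi : A ≤ (s : ℝ) * x (s + 1) := by
    have := Finset.sum_le_card_nsmul (Finset.Icc 1 s) x (x (s + 1))
      (fun j hj => by
        simp only [Finset.mem_Icc] at hj
        exact hx j (s + 1) hj.1 (by omega) (by omega))
    rwa [hcardA, nsmul_eq_mul] at this
  have hClo : (s : ℝ) * x k ≤ C := by
    have := Finset.card_nsmul_le_sum (Finset.Icc (k + 1) m) x (x k)
      (fun j hj => by
        simp only [Finset.mem_Icc] at hj
        exact hx k j (by omega) (by omega) hj.2)
    rwa [hcardC, nsmul_eq_mul] at this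
  -- sum splits
  have hsplit1 : ∑ j ∈ Finset.Icc 1 k, x j = A + B := by
    rw [hA, hB, show Finset.Icc 1 k = Finset.Ioc 0 k from Finset.Icc_add_one_left_eq_Ioc 0 k,
      show Finset.Icc 1 s = Finset.Ioc 0 s from Finset.Icc_add_one_left_eq_Ioc 0 s,
      show Finset.Icc (s + 1) k = Finset.Ioc s k from Finset.Icc_add_one_left_eq_Ioc s k]
    exact (Finset.sum_Ioc_consecutive x (Nat.zero_le s) (le_of_lt hsk)).symm
  have hsplit2 : ∑ j ∈ Finset.Icc (s + 1) m, x j = B + C := by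
    rw [hB, hC, show Finset.Icc (s + 1) m = Finset.Ioc s m from Finset.Icc_add_one_left_eq_Ioc s m,
      show Finset.Icc (s + 1) k = Finset.Ioc s k from Finset.Icc_add_one_left_eq_Ioc s k,
      show Finset.Icc (k + 1) m = Finset.Ioc k m from Finset.Icc_add_one_left_eq_Ioc k m]
    exact (Finset.sum_Ioc_consecutive x (le_of_lt hsk) hkm).symm
  have hVdef : V = (1 / ((k - s : ℕ) : ℝ)) * B := by
    rw [show V = (1 / ((2 * k - m : ℕ) : ℝ)) * B from rfl, h2km]
  have hks0 : (0 : ℝ) < ((k - s : ℕ) : ℝ) := by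
    exact_mod_cast Nat.sub_pos_of_lt hsk
  have hk0 : (0 : ℝ) < ((k : ℕ) : ℝ) := by exact_mod_cast (by omega : 0 < k)
  have hs0 : (0 : ℝ) ≤ (s : ℝ) := Nat.cast_nonneg s
  have hkssk : ((k - s : ℕ) : ℝ) + (s : ℝ) = (k : ℝ) := by
    push_cast [Nat.sub_add_cancel (le_of_lt hsk)]; ring_nf
    exact_mod_cast Nat.sub_add_cancel (le_of_lt hsk)
  rw [hVdef]
  constructor
  · constructor
    · rw [div_mul_eq_mul_div, one_mul, le_div_iff₀ hks0]
      linarith [hBlo]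
    · rw [div_mul_eq_mul_div, one_mul, div_le_iff₀ hks0]
      linarith [hBhi]
  · constructor
    · rw [hsplit1, div_mul_eq_mul_div, div_mul_eq_mul_div, one_mul, one_mul,
        div_le_div_iff₀ hk0 hks0, ← hkssk]
      have key : A * ((k - s : ℕ) : ℝ) ≤ B * (s : ℝ) := by
        calc A * ((k - s : ℕ) : ℝ) ≤ ((s : ℝ) * x (s + 1)) * ((k - s : ℕ) : ℝ) :=
              mul_le_mul_of_nonneg_right hAhi (le_of_lt hks0)
          _ = (s : ℝ) * (((k - s : ℕ) : ℝ) * x (s + 1)) := by ring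
          _ ≤ (s : ℝ) * B := mul_le_mul_of_nonneg_left hBlo hs0
          _ = B * (s : ℝ) := mul_comm _ _
      nlinarith [key]
    · rw [hsplit2, div_mul_eq_mul_div, div_mul_eq_mul_div, one_mul, one_mul,
        div_le_div_iff₀ hks0 hk0, ← hkssk]
      have key : B * (s : ℝ) ≤ C * ((k - s : ℕ) : ℝ) := by
        calc B * (s : ℝ) ≤ (((k - s : ℕ) : ℝ) * x k) * (s : ℝ) :=
              mul_le_mul_of_nonneg_right hBhi hs0
          _ = ((k - s : ℕ) : ℝ) * ((s : ℝ) * x k) := by ring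
          _ ≤ ((k - s : ℕ) : ℝ) * C := mul_le_mul_of_nonneg_left hClo (le_of_lt hks0)
          _ = C * ((k - s : ℕ) : ℝ) := mul_comm _ _
      nlinarith [key]
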